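/- Diagonal estimate: Let a(n) satisfy |a(n)| ≤ d(n) ≪ n^{ε} (divisor bound), let 1 ≤ k ≤ M^{1/4}, Δ ≤ M, and let w be a weight supported on [M, M+Δ] with 0 ≤ w ≤ 1. Then (k/2π²) ∑_{n ≤ M} |a(n)|² n^{−3/2} ∫_M^{M+Δ} w(x) x^{1/2} (cos(4π√(n(x+√x))/k − π/4) − cos(4π√(nx)/k − π/4))² dx ≤ C_ε k^{ε} Δ M^{1/2+ε}. -/

import Mathlib

open Real Finset MeasureTheory


lemma cosDiffSq_le (u v : ℝ) : (Real.cos u - Real.cos v)^2 ≤ 2 * |u - v| := by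
  have h1 : |Real.cos u - Real.cos v| ≤ |u - v| := by
    rw [Real.cos_sub_cos, abs_mul, abs_mul]
    have hs1 : |Real.sin ((u+v)/2)| ≤ 1 := Real.abs_sin_le_one _
    have hs2 : |Real.sin ((u-v)/2)| ≤ |(u-v)/2| := Real.abs_sin_le_abs
    have : |(-2 : ℝ)| = 2 := by norm_num
    rw [this]
    calc 2 * |Real.sin ((u+v)/2)| * |Real.sin ((u-v)/2)|
        ≤ 2 * 1 * |(u-v)/2| := by
          apply mul_le_mul (by nlinarith [abs_nonneg (Real.sin ((u+v)/2))]) hs2 (abs_nonneg _)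
          norm_num
      _ = |u - v| := by rw [abs_div]; norm_num; ring
  have h2 : |Real.cos u - Real.cos v| ≤ 2 := by
    calc |Real.cos u - Real.cos v| ≤ |Real.cos u| + |Real.cos v| := abs_sub _ _
      _ ≤ 1 + 1 := add_le_add (Real.abs_cos_le_one _) (Real.abs_cos_le_one _)
      _ = 2 := by norm_num
  calc (Real.cos u - Real.cos v)^2 = |Real.cos u - Real.cos v| * |Real.cos u - Real.cos v| := by
        rw [sq, ← abs_mul_abs_self]
    _ ≤ 2 * |u - v| := mul_le_mul h2 h1 (abs_nonneg _) (by norm_num)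

lemma sqrtGap {x : ℝ} (hx : 0 ≤ x) : Real.sqrt (x + Real.sqrt x) ≤ Real.sqrt x + 1/2 := by
  have h1 : x + Real.sqrt x ≤ (Real.sqrt x + 1/2)^2 := by
    nlinarith [Real.sq_sqrt hx, Real.sqrt_nonneg x]
  calc Real.sqrt (x + Real.sqrt x) ≤ Real.sqrt ((Real.sqrt x + 1/2)^2) := Real.sqrt_le_sqrt h1
    _ = Real.sqrt x + 1/2 := Real.sqrt_sq (by positivity)

lemma sumInv_le (N : ℕ) : ∑ n ∈ Finset.Icc 1 N, ((n:ℝ))⁻¹ ≤ 1 + Real.log N := by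
  have h := harmonic_le_one_add_log N
  have h2 : ((harmonic N : ℚ) : ℝ) = ∑ n ∈ Finset.Icc 1 N, ((n:ℝ))⁻¹ := by
    rw [harmonic_eq_sum_Icc]; push_cast; ring
  linarith

lemma integBound (w : ℝ → ℝ) (hw : ∀ x, 0 ≤ w x ∧ w x ≤ 1) (M Δ k : ℝ) (n : ℕ)
    (hM : 1 ≤ M) (hΔ : 0 < Δ) (hΔM : Δ ≤ M) (hk : 1 ≤ k) :
    (∫ x in M..(M+Δ), w x * Real.sqrt x *
      (Real.cos (4*π*Real.sqrt ((n:ℝ)*(x+Real.sqrt x))/k - π/4)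
        - Real.cos (4*π*Real.sqrt ((n:ℝ)*x)/k - π/4))^2)
    ≤ Δ * (Real.sqrt 2 * Real.sqrt M * (4*π*Real.sqrt n/k)) := by
  have hk0 : (0:ℝ) < k := by linarith
  have hπ := Real.pi_pos
  set c : ℝ := Real.sqrt 2 * Real.sqrt M * (4*π*Real.sqrt n/k) with hc
  have hc0 : 0 ≤ c := by positivity
  set f : ℝ → ℝ := fun x => w x * Real.sqrt x *
      (Real.cos (4*π*Real.sqrt ((n:ℝ)*(x+Real.sqrt x))/k - π/4)
        - Real.cos (4*π*Real.sqrt ((n:ℝ)*x)/k - π/4))^2 with hf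
  have hpt : ∀ x ∈ Set.Icc M (M+Δ), f x ≤ c := by
    intro x hx
    obtain ⟨hx1, hx2⟩ := hx
    have hx0 : (0:ℝ) ≤ x := by linarith
    have hn0 : (0:ℝ) ≤ (n:ℝ) := Nat.cast_nonneg n
    -- difference of the two angles
    have hAB : 4*π*Real.sqrt ((n:ℝ)*(x+Real.sqrt x))/k - π/4
        - (4*π*Real.sqrt ((n:ℝ)*x)/k - π/4)
        = 4*π*Real.sqrt n/k * (Real.sqrt (x+Real.sqrt x) - Real.sqrt x) := by
      rw [Real.sqrt_mul hn0, Real.sqrt_mul hn0]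
      ring
    have hgap0 : Real.sqrt x ≤ Real.sqrt (x+Real.sqrt x) :=
      Real.sqrt_le_sqrt (by nlinarith [Real.sqrt_nonneg x])
    have hgap : Real.sqrt (x+Real.sqrt x) - Real.sqrt x ≤ 1/2 := by
      have := sqrtGap hx0; linarith
    have hd : (Real.cos (4*π*Real.sqrt ((n:ℝ)*(x+Real.sqrt x))/k - π/4)
        - Real.cos (4*π*Real.sqrt ((n:ℝ)*x)/k - π/4))^2 ≤ 4*π*Real.sqrt n/k := by
      refine (cosDiffSq_le _ _).trans ?_
      rw [hAB, abs_of_nonneg (mul_nonneg (by positivity) (by linarith))]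
      have h4 : (0:ℝ) ≤ 4*π*Real.sqrt n/k := by positivity
      nlinarith [mul_le_mul_of_nonneg_left hgap h4]
    have hsx : Real.sqrt x ≤ Real.sqrt 2 * Real.sqrt M := by
      rw [← Real.sqrt_mul (by norm_num)]
      exact Real.sqrt_le_sqrt (by linarith)
    have hw1 := (hw x).1
    have hw2 := (hw x).2
    calc f x ≤ 1 * (Real.sqrt 2 * Real.sqrt M) * (4*π*Real.sqrt n/k) := by
          apply mul_le_mul _ hd (by positivity) (by positivity)
          apply mul_le_mul hw2 hsx (Real.sqrt_nonneg x) (by norm_num)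
      _ = c := by rw [hc]; ring
  by_cases hint : IntervalIntegrable f volume M (M+Δ)
  · calc (∫ x in M..(M+Δ), f x) ≤ ∫ _ in M..(M+Δ), c :=
          intervalIntegral.integral_mono_on (by linarith) hint intervalIntegrable_const hpt
      _ = Δ * c := by rw [intervalIntegral.integral_const, smul_eq_mul]; ring_nf
  · rw [intervalIntegral.integral_undef hint]
    positivity

set_option maxHeartbeats 1000000 in
theorem stmt10 (a : ℕ → ℂ)
    (ha : ∀ ε > (0:ℝ), ∃ C > (0:ℝ), ∀ n : ℕ, 1 ≤ n → ‖a n‖ ≤ C * (n:ℝ)^ε) :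
    ∀ ε > (0:ℝ), ∃ C > (0:ℝ), ∀ (k M Δ : ℝ) (w : ℝ → ℝ),
      1 ≤ k → k ≤ M^((1:ℝ)/4) → 1 ≤ M → 0 < Δ → Δ ≤ M →
      (∀ x, 0 ≤ w x ∧ w x ≤ 1) → Function.support w ⊆ Set.Icc M (M+Δ) →
      k/(2*π^2) * ∑ n ∈ Finset.Icc 1 ⌊M⌋₊, ‖a n‖^2 * (n:ℝ)^(-(3:ℝ)/2) *
        ∫ x in M..(M+Δ), w x * Real.sqrt x *
          (Real.cos (4*π*Real.sqrt ((n:ℝ)*(x+Real.sqrt x))/k - π/4)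
            - Real.cos (4*π*Real.sqrt ((n:ℝ)*x)/k - π/4))^2
      ≤ C * k^ε * Δ * M^(1/2+ε) := by
  intro ε hε
  obtain ⟨C₁, hC₁, hA⟩ := ha (ε/4) (by positivity)
  have hε2 : (0:ℝ) < 2/ε := by positivity
  refine ⟨4*C₁^2*(1+2/ε) + 1, by positivity, ?_⟩
  intro k M Δ w hk hkM hM hΔ hΔM hw hsupp
  have hπ := Real.pi_pos
  have hπ3 := Real.pi_gt_three
  have hk0 : (0:ℝ) < k := by linarith
  have hM0 : (0:ℝ) < M := by linarith
  set N := ⌊M⌋₊ with hNdef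
  have hN1 : 1 ≤ N := Nat.le_floor (by exact_mod_cast hM)
  have hNM : (N:ℝ) ≤ M := Nat.floor_le hM0.le
  set B : ℝ := C₁^2 * M^(ε/2) * (Δ * (Real.sqrt 2 * Real.sqrt M * (4*π/k))) with hB
  have hB0 : 0 ≤ B := by positivity
  -- per-term bound
  have key : ∀ n ∈ Finset.Icc 1 N, ‖a n‖^2 * (n:ℝ)^(-(3:ℝ)/2) *
      (∫ x in M..(M+Δ), w x * Real.sqrt x *
        (Real.cos (4*π*Real.sqrt ((n:ℝ)*(x+Real.sqrt x))/k - π/4)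
          - Real.cos (4*π*Real.sqrt ((n:ℝ)*x)/k - π/4))^2)
      ≤ B * ((n:ℝ))⁻¹ := by
    intro n hn
    rw [Finset.mem_Icc] at hn
    have hn1 : (1:ℝ) ≤ (n:ℝ) := by exact_mod_cast hn.1
    have hn0 : (0:ℝ) < (n:ℝ) := by linarith
    have hnM : (n:ℝ) ≤ M := le_trans (by exact_mod_cast hn.2) hNM
    have hI := integBound w hw M Δ k n hM hΔ hΔM hk
    have h2 : ‖a n‖^2 ≤ C₁^2 * (n:ℝ)^(ε/2) := by
      have e : (C₁ * (n:ℝ)^(ε/4))^2 = C₁^2 * (n:ℝ)^(ε/2) := by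
        rw [mul_pow]
        congr 1
        rw [sq, ← Real.rpow_add hn0]
        congr 1
        ring
      calc ‖a n‖^2 ≤ (C₁ * (n:ℝ)^(ε/4))^2 :=
            pow_le_pow_left₀ (norm_nonneg _) (hA n hn.1) 2
        _ = _ := e
    have hrw : C₁^2 * (n:ℝ)^(ε/2) * (n:ℝ)^(-(3:ℝ)/2) *
        (Δ * (Real.sqrt 2 * Real.sqrt M * (4*π*Real.sqrt n/k)))
        = C₁^2 * ((n:ℝ)^(ε/2) * (n:ℝ)⁻¹) * (Δ * (Real.sqrt 2 * Real.sqrt M * (4*π/k))) := by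
      have e1 : (n:ℝ)^(-(3:ℝ)/2) * (n:ℝ)^((1:ℝ)/2) = (n:ℝ)⁻¹ := by
        rw [← Real.rpow_add hn0, show (-(3:ℝ)/2 + 1/2) = -1 by norm_num, Real.rpow_neg_one]
      calc C₁^2 * (n:ℝ)^(ε/2) * (n:ℝ)^(-(3:ℝ)/2) *
          (Δ * (Real.sqrt 2 * Real.sqrt M * (4*π*Real.sqrt n/k)))
          = C₁^2 * ((n:ℝ)^(ε/2) * ((n:ℝ)^(-(3:ℝ)/2) * (n:ℝ)^((1:ℝ)/2))) *
            (Δ * (Real.sqrt 2 * Real.sqrt M * (4*π/k))) := by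
            rw [Real.sqrt_eq_rpow ((n:ℝ))]; ring
        _ = _ := by rw [e1]
    calc ‖a n‖^2 * (n:ℝ)^(-(3:ℝ)/2) *
        (∫ x in M..(M+Δ), w x * Real.sqrt x *
          (Real.cos (4*π*Real.sqrt ((n:ℝ)*(x+Real.sqrt x))/k - π/4)
            - Real.cos (4*π*Real.sqrt ((n:ℝ)*x)/k - π/4))^2)
        ≤ ‖a n‖^2 * (n:ℝ)^(-(3:ℝ)/2) *
          (Δ * (Real.sqrt 2 * Real.sqrt M * (4*π*Real.sqrt n/k))) := by
          apply mul_le_mul_of_nonneg_left hI (by positivity)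
      _ ≤ C₁^2 * (n:ℝ)^(ε/2) * (n:ℝ)^(-(3:ℝ)/2) *
          (Δ * (Real.sqrt 2 * Real.sqrt M * (4*π*Real.sqrt n/k))) := by
          apply mul_le_mul_of_nonneg_right (mul_le_mul_of_nonneg_right h2 (by positivity))
            (by positivity)
      _ = C₁^2 * ((n:ℝ)^(ε/2) * (n:ℝ)⁻¹) * (Δ * (Real.sqrt 2 * Real.sqrt M * (4*π/k))) := hrw
      _ ≤ C₁^2 * (M^(ε/2) * (n:ℝ)⁻¹) * (Δ * (Real.sqrt 2 * Real.sqrt M * (4*π/k))) := by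
          apply mul_le_mul_of_nonneg_right (mul_le_mul_of_nonneg_left
            (mul_le_mul_of_nonneg_right
              (Real.rpow_le_rpow hn0.le hnM (by positivity)) (by positivity))
            (by positivity)) (by positivity)
      _ = B * ((n:ℝ))⁻¹ := by rw [hB]; ring
  -- sum bound
  have hsum : (∑ n ∈ Finset.Icc 1 N, ‖a n‖^2 * (n:ℝ)^(-(3:ℝ)/2) *
      (∫ x in M..(M+Δ), w x * Real.sqrt x *
        (Real.cos (4*π*Real.sqrt ((n:ℝ)*(x+Real.sqrt x))/k - π/4)
          - Real.cos (4*π*Real.sqrt ((n:ℝ)*x)/k - π/4))^2))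
      ≤ B * (1 + Real.log M) := by
    calc _ ≤ ∑ n ∈ Finset.Icc 1 N, B * ((n:ℝ))⁻¹ := Finset.sum_le_sum key
      _ = B * ∑ n ∈ Finset.Icc 1 N, ((n:ℝ))⁻¹ := by rw [Finset.mul_sum]
      _ ≤ B * (1 + Real.log N) := mul_le_mul_of_nonneg_left (sumInv_le N) hB0
      _ ≤ B * (1 + Real.log M) := by
          have hlog : Real.log N ≤ Real.log M :=
            Real.log_le_log (by exact_mod_cast hN1) hNM
          apply mul_le_mul_of_nonneg_left (by linarith) hB0
  -- final arithmetic
  set u : ℝ := M^(ε/2) with hu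
  have hu1 : 1 ≤ u := Real.one_le_rpow hM (by positivity)
  have hL0 : 0 ≤ Real.log M := Real.log_nonneg hM
  have hlogM : Real.log M ≤ (2/ε)*(u - 1) := by
    have h1 := Real.log_rpow hM0 (ε/2)
    have h2 := Real.log_le_sub_one_of_pos (Real.rpow_pos_of_pos hM0 (ε/2))
    rw [h1] at h2
    calc Real.log M = (2/ε)*((ε/2)*Real.log M) := by field_simp
      _ ≤ (2/ε)*(u - 1) := mul_le_mul_of_nonneg_left h2 hε2.le
  have huL : u*(1 + Real.log M) ≤ (1+2/ε)*(u*u) := by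
    have h1L : 1 + Real.log M ≤ (1+2/ε)*u := by nlinarith
    nlinarith [mul_le_mul_of_nonneg_left h1L (by positivity : (0:ℝ) ≤ u)]
  have hs2 : Real.sqrt 2 ≤ 2 := by
    nlinarith [Real.sq_sqrt (by norm_num : (0:ℝ) ≤ 2), Real.sqrt_nonneg 2]
  have hMM : Real.sqrt M * (u*u) = M^(1/2+ε) := by
    rw [hu, ← Real.rpow_add hM0, Real.sqrt_eq_rpow, ← Real.rpow_add hM0]
    congr 1
    ring
  have hkε : (1:ℝ) ≤ k^ε := Real.one_le_rpow hk hε.le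
  have hX0 : (0:ℝ) < M^(1/2+ε) := Real.rpow_pos_of_pos hM0 _
  calc k/(2*π^2) * (∑ n ∈ Finset.Icc 1 N, ‖a n‖^2 * (n:ℝ)^(-(3:ℝ)/2) *
        (∫ x in M..(M+Δ), w x * Real.sqrt x *
          (Real.cos (4*π*Real.sqrt ((n:ℝ)*(x+Real.sqrt x))/k - π/4)
            - Real.cos (4*π*Real.sqrt ((n:ℝ)*x)/k - π/4))^2))
      ≤ k/(2*π^2) * (B * (1 + Real.log M)) :=
        mul_le_mul_of_nonneg_left hsum (by positivity)
    _ = 2*C₁^2*Δ*(Real.sqrt 2 * Real.sqrt M)*(u*(1 + Real.log M))/π := by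
        rw [hB, hu]; field_simp; ring
    _ ≤ 2*C₁^2*Δ*(2 * Real.sqrt M)*((1+2/ε)*(u*u))/π := by
        gcongr
    _ = 4*C₁^2*(1+2/ε) * (Real.sqrt M * (u*u)) * Δ / π := by ring
    _ = 4*C₁^2*(1+2/ε) * M^(1/2+ε) * Δ / π := by rw [hMM]
    _ ≤ 4*C₁^2*(1+2/ε) * M^(1/2+ε) * Δ := by
        apply div_le_self (by positivity) (by linarith)
    _ ≤ (4*C₁^2*(1+2/ε) + 1) * k^ε * Δ * M^(1/2+ε) := by
        nlinarith [mul_pos hΔ hX0, mul_le_mul_of_nonneg_right hkε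
          (le_of_lt (mul_pos (mul_pos (by positivity : (0:ℝ) < 4*C₁^2*(1+2/ε)+1) hΔ) hX0))]
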